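/- Let (Ω, P) be a probability space, Π a finite index set of size d with a distinguished element π₀, and for each π ∈ Π let A_π and A°_π be real-valued random variables. Let F(x) = P(A°_{π₀} < x), F̃(x) = (1/d)·#{π ∈ Π : A°_π < x}, F̂(x) = (1/d)·#{π ∈ Π : A_π < x}, and p̂ = (1/d)·#{π ∈ Π : A_π ≥ A_{π₀}}. Assume: (1) with probability at least 1 − γ₁, sup_{x ∈ ℝ} |F̃(x) − F(x)| ≤ δ₁; (2) with probability at least 1 − γ₂, both (1/d)·Σ_{π ∈ Π} (A_π − A°_π)² ≤ δ₂² and |A_{π₀} − A°_{π₀}| ≤ δ₂; and (3) the law of A°_{π₀} has a density bounded above by D. Define the conformal prediction event at level 1 − ε as {p̂ > ε} (membership of the true future trajectory in the conformal set C_{1−ε}). Then for every ε ∈ (0, 1), |P(p̂ > ε) − (1 − ε)| ≤ 6δ₁ + 4δ₂ + 2D(δ₂ + 2√δ₂) + γ₁ + γ₂. -/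

import Mathlib

open MeasureTheory Finset

set_option maxHeartbeats 1000000 in
/-- Theorem 1 (Approximate General Validity of Inductive Conformal Inference),
coverage statement: the conformal prediction set built by inverting the
randomized p-value at level ε has coverage
approximately 1 - ε. -/
theorem approx_general_validity_coverage
    {Ω : Type*} [MeasurableSpace Ω] (μ : Measure Ω) [IsProbabilityMeasure μ]
    {ι : Type*} [Fintype ι] (π₀ : ι) (d : ℕ) (hd : Fintype.card ι = d)
    (A Ao : ι → Ω → ℝ)
    (hA : ∀ π, Measurable (A π)) (hAo : ∀ π, Measurable (Ao π))
    (δ₁ δ₂ γ₁ γ₂ D : ℝ)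
    (hδ₁ : 0 ≤ δ₁) (hδ₂ : 0 ≤ δ₂) (hγ₁ : 0 ≤ γ₁) (hγ₂ : 0 ≤ γ₂) (hD : 0 ≤ D)
    -- the CDF of the oracle non-conformity score of the identity permutation
    (F : ℝ → ℝ) (hF : ∀ x, F x = (μ {ω | Ao π₀ ω < x}).toReal)
    -- the empirical CDF of the oracle scores over the permutations
    (Ftil : Ω → ℝ → ℝ)
    (hFtil : ∀ ω x, Ftil ω x =
      ((Finset.univ.filter fun π => Ao π ω < x).card : ℝ) / d)
    -- the randomized conformal p-value
    (phat : Ω → ℝ)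
    (hphat : ∀ ω, phat ω =
      ((Finset.univ.filter fun π => A π ω ≥ A π₀ ω).card : ℝ) / d)
    -- (1) approximate ergodicity
    (h1 : ENNReal.ofReal (1 - γ₁) ≤ μ {ω | ∀ x : ℝ, |Ftil ω x - F x| ≤ δ₁})
    -- (2) small estimation errors
    (h2 : ENNReal.ofReal (1 - γ₂) ≤
      μ {ω | (∑ π : ι, (A π ω - Ao π ω) ^ 2) / d ≤ δ₂ ^ 2 ∧
             |A π₀ ω - Ao π₀ ω| ≤ δ₂})
    -- (3) the law of the oracle score has a Lebesgue density bounded by D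
    (h3 : ∃ f : ℝ → ENNReal, μ.map (Ao π₀) = volume.withDensity f ∧
      ∀ᵐ x ∂(volume : Measure ℝ), f x ≤ ENNReal.ofReal D) :
    ∀ ε ∈ Set.Ioo (0 : ℝ) 1,
      |(μ {ω | ε < phat ω}).toReal - (1 - ε)| ≤
        6 * δ₁ + 4 * δ₂ + 2 * D * (δ₂ + 2 * Real.sqrt δ₂) + γ₁ + γ₂ := by
  classical
  obtain ⟨f, hfmap, hfbd⟩ := h3
  intro ε hε
  obtain ⟨hε0, hε1⟩ := hε
  set t := Real.sqrt δ₂ with ht_def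
  have ht0 : 0 ≤ t := Real.sqrt_nonneg _
  have ht2 : t ^ 2 = δ₂ := Real.sq_sqrt hδ₂
  set c := δ₁ + δ₂ + D * (t + δ₂) with hc_def
  have hc0 : 0 ≤ c := by positivity
  have hdpos : 0 < (d : ℝ) := by
    have : 0 < d := hd ▸ Fintype.card_pos_iff.mpr ⟨π₀⟩
    exact_mod_cast this
  -- the pushforward measure
  set ν := μ.map (Ao π₀) with hν_def
  have hν : ∀ x, ν (Set.Iio x) = μ {ω | Ao π₀ ω < x} := fun x => by
    rw [hν_def, Measure.map_apply (hAo π₀) measurableSet_Iio]; rfl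
  have hνprob : IsProbabilityMeasure ν := Measure.isProbabilityMeasure_map (hAo π₀).aemeasurable
  have hFν : ∀ x, F x = (ν (Set.Iio x)).toReal := fun x => by rw [hF, hν]
  -- basic facts about F
  have hF0 : ∀ x, 0 ≤ F x := fun x => by rw [hF]; exact ENNReal.toReal_nonneg
  have hF1 : ∀ x, F x ≤ 1 := fun x => by
    rw [hF]
    have := ENNReal.toReal_mono (measure_ne_top μ Set.univ) (measure_mono (Set.subset_univ {ω | Ao π₀ ω < x}))
    simpa using this
  have hFmono : Monotone F := fun x y hxy => by
    rw [hF, hF]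
    exact ENNReal.toReal_mono (measure_ne_top μ _) (measure_mono fun ω h => lt_of_lt_of_le h hxy)
  -- Lipschitz upper bound from the density
  have hFlip : ∀ x s, 0 ≤ s → F (x + s) ≤ F x + D * s := by
    intro x s hs
    have hIco : ν (Set.Ico x (x + s)) ≤ ENNReal.ofReal D * ENNReal.ofReal s := by
      rw [hfmap, withDensity_apply _ measurableSet_Ico]
      calc ∫⁻ a in Set.Ico x (x + s), f a
          ≤ ∫⁻ _ in Set.Ico x (x + s), ENNReal.ofReal D :=
            setLIntegral_mono_ae aemeasurable_const (hfbd.mono fun a ha _ => ha)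
        _ = ENNReal.ofReal D * volume (Set.Ico x (x + s)) := by
            rw [setLIntegral_const]
        _ = ENNReal.ofReal D * ENNReal.ofReal s := by
            rw [Real.volume_Ico]; ring_nf
    have hsub : Set.Iio (x + s) ⊆ Set.Iio x ∪ Set.Ico x (x + s) := by
      intro y hy
      rcases lt_or_ge y x with h | h
      · exact Or.inl h
      · exact Or.inr ⟨h, hy⟩
    have hmeas : ν (Set.Iio (x + s)) ≤ ν (Set.Iio x) + ENNReal.ofReal D * ENNReal.ofReal s :=
      ((measure_mono hsub).trans (measure_union_le _ _)).trans (add_le_add le_rfl hIco)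
    have hfin : ν (Set.Iio x) + ENNReal.ofReal D * ENNReal.ofReal s ≠ ⊤ := by
      exact ENNReal.add_ne_top.mpr ⟨measure_ne_top ν _, ENNReal.mul_ne_top ENNReal.ofReal_ne_top ENNReal.ofReal_ne_top⟩
    have := ENNReal.toReal_mono hfin hmeas
    rw [ENNReal.toReal_add (measure_ne_top ν _) (ENNReal.mul_ne_top ENNReal.ofReal_ne_top ENNReal.ofReal_ne_top),
      ENNReal.toReal_mul, ENNReal.toReal_ofReal hD, ENNReal.toReal_ofReal hs] at this
    rw [hFν, hFν]
    exact this
  -- F is continuous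
  have hFcont : Continuous F := by
    apply LipschitzWith.continuous (K := Real.toNNReal D)
    apply LipschitzWith.of_dist_le_mul
    intro x y
    rw [Real.dist_eq, Real.dist_eq, Real.coe_toNNReal D hD]
    rcases le_total x y with h | h
    · have h1' := hFlip x (y - x) (by linarith)
      have h2' := hFmono h
      rw [add_sub_cancel] at h1'
      rw [abs_of_nonpos (by linarith), abs_of_nonpos (by linarith)]
      nlinarith
    · have h1' := hFlip y (x - y) (by linarith)
      have h2' := hFmono h
      rw [add_sub_cancel] at h1'
      rw [abs_of_nonneg (by linarith), abs_of_nonneg (by linarith)]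
      nlinarith
  -- F attains each value in (0,1)
  have hhit : ∀ u, 0 < u → u < 1 → ∃ x, F x = u := by
    intro u hu0 hu1
    have hlow : ∃ a, F a < u := by
      have h' := tendsto_measure_Ici_atBot ν
      rw [measure_univ] at h'
      have h'' : Filter.Tendsto (fun x => (ν (Set.Ici x)).toReal) Filter.atBot (nhds 1) :=
        (ENNReal.tendsto_toReal ENNReal.one_ne_top).comp h'
      have hcompl : ∀ x : ℝ, F x = 1 - (ν (Set.Ici x)).toReal := by
        intro x
        have hc : ν (Set.Ici x) + ν (Set.Iio x) = 1 := by
          rw [← Set.compl_Ici (a := x)]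
          rw [measure_add_measure_compl measurableSet_Ici, measure_univ]
        have := congrArg ENNReal.toReal hc
        rw [ENNReal.toReal_add (measure_ne_top ν _) (measure_ne_top ν _), ENNReal.toReal_one] at this
        rw [hFν]; linarith
      have htend : Filter.Tendsto F Filter.atBot (nhds 0) := by
        have : Filter.Tendsto (fun x : ℝ => 1 - (ν (Set.Ici x)).toReal) Filter.atBot (nhds (1 - 1)) :=
          Filter.Tendsto.const_sub 1 h''
        rw [sub_self] at this
        exact this.congr fun x => (hcompl x).symm
      exact (htend.eventually_lt_const hu0).exists
    have hhigh : ∃ b, u < F b := by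
      have h' := tendsto_measure_Iic_atTop ν
      rw [measure_univ] at h'
      have h'' : Filter.Tendsto (fun x => (ν (Set.Iic x)).toReal) Filter.atTop (nhds 1) :=
        (ENNReal.tendsto_toReal ENNReal.one_ne_top).comp h'
      obtain ⟨x₁, hx₁⟩ := (h''.eventually_const_lt hu1).exists
      refine ⟨x₁ + 1, lt_of_lt_of_le hx₁ ?_⟩
      rw [hFν]
      exact ENNReal.toReal_mono (measure_ne_top ν _) (measure_mono fun y hy => Set.mem_Iio.mpr (lt_of_le_of_lt (Set.mem_Iic.mp hy) (lt_add_one x₁)))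
    obtain ⟨a, ha⟩ := hlow
    obtain ⟨b, hb⟩ := hhigh
    have hab : a ≤ b := by
      by_contra hcon
      push_neg at hcon
      exact absurd (hFmono hcon.le) (by linarith)
    obtain ⟨x, _, hx⟩ := intermediate_value_Icc hab hFcont.continuousOn ⟨ha.le, hb.le⟩
    exact ⟨x, hx⟩
  -- upper bound for P(F(Ao) < u)
  have hupper : ∀ u : ℝ, 0 < u → (μ {ω | F (Ao π₀ ω) < u}).toReal ≤ u := by
    intro u hu
    rcases lt_or_ge u 1 with hu1 | hu1
    · obtain ⟨x, hx⟩ := hhit u hu hu1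
      have hsub : {ω | F (Ao π₀ ω) < u} ⊆ {ω | Ao π₀ ω < x} := by
        intro ω h
        by_contra hcon
        have hcon' : x ≤ Ao π₀ ω := not_lt.mp hcon
        have hle : u ≤ F (Ao π₀ ω) := by rw [← hx]; exact hFmono hcon'
        exact absurd hle (not_le.mpr h)
      calc (μ {ω | F (Ao π₀ ω) < u}).toReal
          ≤ (μ {ω | Ao π₀ ω < x}).toReal :=
            ENNReal.toReal_mono (measure_ne_top μ _) (measure_mono hsub)
        _ = F x := (hF x).symm
        _ = u := hx
    · calc (μ {ω | F (Ao π₀ ω) < u}).toReal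
          ≤ (μ Set.univ).toReal := ENNReal.toReal_mono (measure_ne_top μ _)
            (measure_mono (Set.subset_univ _))
        _ = 1 := by simp
        _ ≤ u := hu1
  -- lower bound for P(F(Ao) < u)
  have hlower : ∀ u : ℝ, u < 1 → u ≤ (μ {ω | F (Ao π₀ ω) < u}).toReal := by
    intro u hu1
    rcases le_or_gt u 0 with hu0 | hu0
    · exact hu0.trans ENNReal.toReal_nonneg
    apply le_of_forall_pos_le_add
    intro η hη
    rcases le_or_gt u η with h | h
    · linarith [ENNReal.toReal_nonneg (a := μ {ω | F (Ao π₀ ω) < u})]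
    obtain ⟨x, hx⟩ := hhit (u - η) (by linarith) (by linarith)
    have hsub : {ω | Ao π₀ ω < x} ⊆ {ω | F (Ao π₀ ω) < u} := by
      intro ω hω
      have := hFmono (le_of_lt hω)
      rw [hx] at this
      exact lt_of_le_of_lt this (by linarith)
    have : u - η ≤ (μ {ω | F (Ao π₀ ω) < u}).toReal := by
      rw [← hx, hF]
      exact ENNReal.toReal_mono (measure_ne_top μ _) (measure_mono hsub)
    linarith
  -- measurability of the counting functions
  have hmeasN : ∀ q : ℝ, Measurable (fun ω => ((univ.filter fun π => Ao π ω < q).card : ℝ)) := by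
    intro q
    have heq : (fun ω => ((univ.filter fun π => Ao π ω < q).card : ℝ))
        = fun ω => ∑ π : ι, if Ao π ω < q then (1:ℝ) else 0 := by
      funext ω; rw [Finset.sum_boole]
    rw [heq]
    exact Finset.measurable_sum _ fun π _ =>
      Measurable.ite (measurableSet_lt (hAo π) measurable_const) measurable_const measurable_const
  -- the ergodicity event
  set E₁ := {ω | ∀ x : ℝ, |Ftil ω x - F x| ≤ δ₁} with hE₁def
  -- rational reduction for E₁
  have hE₁eq : E₁ = ⋂ q : ℚ, {ω | |Ftil ω (q : ℝ) - F q| ≤ δ₁} := by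
    apply Set.Subset.antisymm
    · intro ω h
      simp only [Set.mem_iInter]
      exact fun q => h (q : ℝ)
    · intro ω h
      simp only [Set.mem_iInter, Set.mem_setOf_eq] at h
      intro x
      apply le_of_forall_pos_le_add
      intro η hη
      set S := univ.filter (fun π => Ao π ω < x) with hSdef
      obtain ⟨m, hmx, hmS⟩ : ∃ m, m < x ∧ ∀ π ∈ S, Ao π ω ≤ m := by
        rcases S.eq_empty_or_nonempty with hS | hS
        · exact ⟨x - 1, by linarith, fun π hπ => absurd hπ (by simp [hS])⟩
        · have hSne : (S.image fun π => Ao π ω).Nonempty := hS.image _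
          refine ⟨(S.image fun π => Ao π ω).max' hSne, ?_, ?_⟩
          · obtain ⟨π, hπ, hπeq⟩ := Finset.mem_image.mp ((S.image fun π => Ao π ω).max'_mem hSne)
            rw [← hπeq]
            exact (Finset.mem_filter.mp hπ).2
          · intro π hπ
            exact Finset.le_max' (S.image fun π => Ao π ω) (Ao π ω) (Finset.mem_image_of_mem _ hπ)
      have hηD : 0 < η / (D + 1) := by positivity
      obtain ⟨q, hq1, hq2⟩ := exists_rat_btwn (show max m (x - η / (D + 1)) < x from
        max_lt hmx (by linarith))
      have hqm : m < (q : ℝ) := lt_of_le_of_lt (le_max_left _ _) hq1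
      have hqx : x - η / (D + 1) < (q : ℝ) := lt_of_le_of_lt (le_max_right _ _) hq1
      have hfilter_eq : univ.filter (fun π => Ao π ω < (q : ℝ)) = S := by
        ext π
        simp only [Finset.mem_filter, Finset.mem_univ, true_and, hSdef]
        constructor
        · intro hh; exact lt_trans hh hq2
        · intro hh
          exact lt_of_le_of_lt (hmS π (Finset.mem_filter.mpr ⟨Finset.mem_univ π, hh⟩)) hqm
      have hFt : Ftil ω x = Ftil ω (q : ℝ) := by
        rw [hFtil, hFtil, hfilter_eq, hSdef]
      have hFqx : F (q : ℝ) ≤ F x := hFmono hq2.le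
      have hFxq : F x ≤ F (q : ℝ) + η := by
        have h' := hFlip (q : ℝ) (x - (q : ℝ)) (by linarith)
        rw [add_sub_cancel] at h'
        have hD' : D * (x - (q : ℝ)) ≤ η := by
          have hxq : x - (q : ℝ) ≤ η / (D + 1) := by linarith
          calc D * (x - (q : ℝ)) ≤ D * (η / (D + 1)) :=
                mul_le_mul_of_nonneg_left hxq hD
            _ ≤ η := by
                rw [mul_comm, div_mul_eq_mul_div, div_le_iff₀ (by linarith : (0:ℝ) < D + 1)]
                nlinarith
        linarith
      calc |Ftil ω x - F x| = |(Ftil ω (q : ℝ) - F (q : ℝ)) + (F (q : ℝ) - F x)| := by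
            rw [hFt]; ring_nf
        _ ≤ |Ftil ω (q : ℝ) - F (q : ℝ)| + |F (q : ℝ) - F x| := abs_add_le _ _
        _ ≤ δ₁ + η := by
            refine add_le_add (h q) ?_
            rw [abs_of_nonpos (by linarith)]
            linarith
  have hE₁meas : MeasurableSet E₁ := by
    rw [hE₁eq]
    refine MeasurableSet.iInter fun q => ?_
    have hm : Measurable fun ω => |Ftil ω (q : ℝ) - F q| := by
      have heq : (fun ω => Ftil ω (q : ℝ))
          = fun ω => ((univ.filter fun π => Ao π ω < (q : ℝ)).card : ℝ) / d :=
        funext fun ω => hFtil ω q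
      have : Measurable fun ω => Ftil ω (q : ℝ) := by
        rw [heq]; exact (hmeasN q).div_const _
      exact (this.sub measurable_const).abs
    exact measurableSet_le hm measurable_const
  -- the estimation event
  set E₂ := {ω | (∑ π : ι, (A π ω - Ao π ω) ^ 2) / d ≤ δ₂ ^ 2 ∧ |A π₀ ω - Ao π₀ ω| ≤ δ₂} with hE₂def
  have hE₂meas : MeasurableSet E₂ := by
    have hg1 : Measurable fun ω => (∑ π : ι, (A π ω - Ao π ω) ^ 2) / (d : ℝ) :=
      (Finset.measurable_sum _ fun π _ => ((hA π).sub (hAo π)).pow_const 2).div_const _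
    have hg2 : Measurable fun ω => |A π₀ ω - Ao π₀ ω| := ((hA π₀).sub (hAo π₀)).abs
    have : E₂ = {ω | (∑ π : ι, (A π ω - Ao π ω) ^ 2) / d ≤ δ₂ ^ 2} ∩ {ω | |A π₀ ω - Ao π₀ ω| ≤ δ₂} := by
      rw [hE₂def]; rfl
    rw [this]
    exact (measurableSet_le hg1 measurable_const).inter (measurableSet_le hg2 measurable_const)
  -- complements are small
  have hcompl : ∀ (E : Set Ω) (γ : ℝ), MeasurableSet E → ENNReal.ofReal (1 - γ) ≤ μ E →
      (μ Eᶜ).toReal ≤ γ := by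
    intro E γ hEm hle
    have h1' : 1 - γ ≤ (μ E).toReal := by
      rcases le_or_gt (1 - γ) 0 with h | h
      · exact h.trans ENNReal.toReal_nonneg
      · calc 1 - γ = (ENNReal.ofReal (1 - γ)).toReal := (ENNReal.toReal_ofReal h.le).symm
          _ ≤ (μ E).toReal := ENNReal.toReal_mono (measure_ne_top μ _) hle
    have hcc : μ Eᶜ = 1 - μ E := by
      rw [measure_compl hEm (measure_ne_top μ _), measure_univ]
    rw [hcc, ENNReal.toReal_sub_of_le prob_le_one ENNReal.one_ne_top, ENNReal.toReal_one]
    linarith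
  have hE₁c : (μ E₁ᶜ).toReal ≤ γ₁ := hcompl E₁ γ₁ hE₁meas h1
  have hE₂c : (μ E₂ᶜ).toReal ≤ γ₂ := hcompl E₂ γ₂ hE₂meas h2
  -- pointwise core lemma
  have key : ∀ ω ∈ E₁ ∩ E₂,
      (ε < phat ω → F (Ao π₀ ω) < 1 - ε + c) ∧ (F (Ao π₀ ω) < 1 - ε - c → ε < phat ω) := by
    rintro ω ⟨hE1ω, hE2aω, hE2bω⟩
    set x₀ := A π₀ ω with hx₀
    set y₀ := Ao π₀ ω with hy₀
    set B := univ.filter (fun π => t < |A π ω - Ao π ω|) with hBdef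
    have hsum_bound : ∑ π : ι, (A π ω - Ao π ω) ^ 2 ≤ d * δ₂ ^ 2 := by
      rw [div_le_iff₀ hdpos] at hE2aω
      linarith
    have hterm : ∀ π ∈ B, δ₂ ≤ (A π ω - Ao π ω) ^ 2 := by
      intro π hπ
      have ht' := (Finset.mem_filter.mp hπ).2
      calc δ₂ = t ^ 2 := ht2.symm
        _ ≤ |A π ω - Ao π ω| ^ 2 := pow_le_pow_left₀ ht0 ht'.le 2
        _ = (A π ω - Ao π ω) ^ 2 := sq_abs _
    have hcard_sum : (B.card : ℝ) * δ₂ ≤ ∑ π : ι, (A π ω - Ao π ω) ^ 2 := by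
      calc (B.card : ℝ) * δ₂ = ∑ _π ∈ B, δ₂ := by rw [Finset.sum_const, nsmul_eq_mul]
        _ ≤ ∑ π ∈ B, (A π ω - Ao π ω) ^ 2 := Finset.sum_le_sum hterm
        _ ≤ ∑ π : ι, (A π ω - Ao π ω) ^ 2 :=
            Finset.sum_le_sum_of_subset_of_nonneg (Finset.subset_univ B)
              (fun π _ _ => sq_nonneg _)
    have hBcard : (B.card : ℝ) ≤ d * δ₂ := by
      rcases eq_or_lt_of_le hδ₂ with heq | hpos
      · have hBempty : B = ∅ := by
          by_contra hne
          obtain ⟨π, hπ⟩ := Finset.nonempty_iff_ne_empty.mpr hne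
          have h0 : δ₂ ≤ (A π ω - Ao π ω) ^ 2 := hterm π hπ
          have hle : (A π ω - Ao π ω) ^ 2 ≤ ∑ π' : ι, (A π' ω - Ao π' ω) ^ 2 :=
            Finset.single_le_sum (f := fun π' => (A π' ω - Ao π' ω) ^ 2)
              (fun π' _ => sq_nonneg _) (Finset.mem_univ π)
          have ht'' := (Finset.mem_filter.mp hπ).2
          have htz : t = 0 := by rw [ht_def, ← heq, Real.sqrt_zero]
          rw [htz] at ht''
          have hpos2 : 0 < (A π ω - Ao π ω) ^ 2 := by
            rw [← sq_abs]; exact pow_pos ht'' 2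
          rw [← heq] at hsum_bound
          simp only [ne_eq, OfNat.ofNat_ne_zero, not_false_eq_true, zero_pow, mul_zero] at hsum_bound
          linarith
        rw [hBempty]
        simp
        positivity
      · have h' : (B.card : ℝ) * δ₂ ≤ (d * δ₂) * δ₂ := by nlinarith
        exact le_of_mul_le_mul_right h' hpos
    -- counting comparison
    have hcount1 : ∀ x : ℝ, ((univ.filter fun π => A π ω < x).card : ℝ)
        ≤ ((univ.filter fun π => Ao π ω < x + t).card : ℝ) + B.card := by
      intro x
      have hsub : (univ.filter fun π => A π ω < x)
          ⊆ (univ.filter fun π => Ao π ω < x + t) ∪ B := by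
        intro π hπ
        have hπ' := (Finset.mem_filter.mp hπ).2
        by_cases hb : t < |A π ω - Ao π ω|
        · exact Finset.mem_union_right _ (Finset.mem_filter.mpr ⟨Finset.mem_univ π, hb⟩)
        · push_neg at hb
          have := (abs_le.mp hb).1
          exact Finset.mem_union_left _
            (Finset.mem_filter.mpr ⟨Finset.mem_univ π, by linarith⟩)
      calc ((univ.filter fun π => A π ω < x).card : ℝ)
          ≤ (((univ.filter fun π => Ao π ω < x + t) ∪ B).card : ℝ) := by
            exact_mod_cast Finset.card_le_card hsub
        _ ≤ ((univ.filter fun π => Ao π ω < x + t).card : ℝ) + B.card := by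
            exact_mod_cast Finset.card_union_le _ _
    have hcount2 : ∀ x : ℝ, ((univ.filter fun π => Ao π ω < x - t).card : ℝ)
        ≤ ((univ.filter fun π => A π ω < x).card : ℝ) + B.card := by
      intro x
      have hsub : (univ.filter fun π => Ao π ω < x - t)
          ⊆ (univ.filter fun π => A π ω < x) ∪ B := by
        intro π hπ
        have hπ' := (Finset.mem_filter.mp hπ).2
        by_cases hb : t < |A π ω - Ao π ω|
        · exact Finset.mem_union_right _ (Finset.mem_filter.mpr ⟨Finset.mem_univ π, hb⟩)
        · push_neg at hb
          have := (abs_le.mp hb).2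
          exact Finset.mem_union_left _
            (Finset.mem_filter.mpr ⟨Finset.mem_univ π, by linarith⟩)
      calc ((univ.filter fun π => Ao π ω < x - t).card : ℝ)
          ≤ (((univ.filter fun π => A π ω < x) ∪ B).card : ℝ) := by
            exact_mod_cast Finset.card_le_card hsub
        _ ≤ ((univ.filter fun π => A π ω < x).card : ℝ) + B.card := by
            exact_mod_cast Finset.card_union_le _ _
    -- p-value characterization
    have hphat_iff : ε < phat ω ↔
        ((univ.filter fun π => A π ω < x₀).card : ℝ) < (1 - ε) * d := by
      have hsplit : ((univ.filter fun π => A π ω ≥ A π₀ ω).card : ℕ)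
          + ((univ.filter fun π => A π ω < x₀).card : ℕ) = d := by
        have h' := Finset.card_filter_add_card_filter_not
          (s := (univ : Finset ι)) (p := fun π => A π ω ≥ A π₀ ω)
        rw [Finset.card_univ, hd] at h'
        have h'' : (univ.filter fun π => ¬ (A π ω ≥ A π₀ ω))
            = (univ.filter fun π => A π ω < x₀) := by
          apply Finset.filter_congr
          intro π _
          simp [not_le, hx₀]
        rw [h''] at h'
        exact h'
      have hsplitR : ((univ.filter fun π => A π ω ≥ A π₀ ω).card : ℝ)
          = d - ((univ.filter fun π => A π ω < x₀).card : ℝ) := by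
        have := congrArg (fun n : ℕ => (n : ℝ)) hsplit
        push_cast at this
        linarith
      rw [hphat ω, hsplitR, lt_div_iff₀ hdpos]
      constructor <;> intro h' <;> nlinarith
    constructor
    · -- ε < phat ω → F y₀ < 1 - ε + c
      intro hp
      have hN := hphat_iff.mp hp
      have h₁ := hcount2 x₀
      have hFtil1 : Ftil ω (x₀ - t) < 1 - ε + δ₂ := by
        rw [hFtil, div_lt_iff₀ hdpos]
        nlinarith
      have hE1' := (abs_le.mp (hE1ω (x₀ - t))).1
      have h2b := abs_le.mp hE2bω
      have hm1 : F y₀ ≤ F ((x₀ - t) + (t + δ₂)) := hFmono (by linarith [h2b.1])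
      have hm2 : F ((x₀ - t) + (t + δ₂)) ≤ F (x₀ - t) + D * (t + δ₂) :=
        hFlip (x₀ - t) (t + δ₂) (by linarith)
      have : F (x₀ - t) ≤ Ftil ω (x₀ - t) + δ₁ := by linarith
      rw [hc_def]
      linarith
    · -- F y₀ < 1 - ε - c → ε < phat ω
      intro hFy
      rw [hc_def] at hFy
      have h2b := abs_le.mp hE2bω
      have hm1 : F (x₀ + t) ≤ F (y₀ + (δ₂ + t)) := hFmono (by linarith [h2b.2])
      have hm2 : F (y₀ + (δ₂ + t)) ≤ F y₀ + D * (δ₂ + t) := hFlip y₀ (δ₂ + t) (by linarith)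
      have hE1' := (abs_le.mp (hE1ω (x₀ + t))).2
      have hFtil2 : Ftil ω (x₀ + t) < 1 - ε - δ₂ := by
        have : D * (δ₂ + t) = D * (t + δ₂) := by ring
        linarith
      have hNt : ((univ.filter fun π => Ao π ω < x₀ + t).card : ℝ) < (1 - ε - δ₂) * d := by
        rw [hFtil, div_lt_iff₀ hdpos] at hFtil2
        exact hFtil2
      have h₁ := hcount1 x₀
      apply hphat_iff.mpr
      nlinarith
  -- assembling the measure bounds
  set T := {ω | ε < phat ω} with hTdef
  set Su := {ω | F (Ao π₀ ω) < 1 - ε + c} with hSudef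
  set Sl := {ω | F (Ao π₀ ω) < 1 - ε - c} with hSldef
  have hinc1 : T ⊆ Su ∪ (E₁ᶜ ∪ E₂ᶜ) := by
    intro ω hω
    by_cases h1ω : ω ∈ E₁
    · by_cases h2ω : ω ∈ E₂
      · exact Or.inl ((key ω ⟨h1ω, h2ω⟩).1 hω)
      · exact Or.inr (Or.inr h2ω)
    · exact Or.inr (Or.inl h1ω)
  have hinc2 : Sl ⊆ T ∪ (E₁ᶜ ∪ E₂ᶜ) := by
    intro ω hω
    by_cases h1ω : ω ∈ E₁
    · by_cases h2ω : ω ∈ E₂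
      · exact Or.inl ((key ω ⟨h1ω, h2ω⟩).2 hω)
      · exact Or.inr (Or.inr h2ω)
    · exact Or.inr (Or.inl h1ω)
  have htriple : ∀ S₁ S₂ : Set Ω, S₁ ⊆ S₂ ∪ (E₁ᶜ ∪ E₂ᶜ) →
      (μ S₁).toReal ≤ (μ S₂).toReal + ((μ E₁ᶜ).toReal + (μ E₂ᶜ).toReal) := by
    intro S₁ S₂ hsub
    have hμ : μ S₁ ≤ μ S₂ + (μ E₁ᶜ + μ E₂ᶜ) :=
      (measure_mono hsub).trans ((measure_union_le _ _).trans
        (add_le_add le_rfl (measure_union_le _ _)))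
    have hfin : μ S₂ + (μ E₁ᶜ + μ E₂ᶜ) ≠ ⊤ :=
      ENNReal.add_ne_top.mpr ⟨measure_ne_top μ _,
        ENNReal.add_ne_top.mpr ⟨measure_ne_top μ _, measure_ne_top μ _⟩⟩
    have := ENNReal.toReal_mono hfin hμ
    rwa [ENNReal.toReal_add (measure_ne_top μ _)
      (ENNReal.add_ne_top.mpr ⟨measure_ne_top μ _, measure_ne_top μ _⟩),
      ENNReal.toReal_add (measure_ne_top μ _) (measure_ne_top μ _)] at this
  have hup : (μ T).toReal ≤ 1 - ε + c + γ₁ + γ₂ := by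
    have h' := htriple T Su hinc1
    have hSu : (μ Su).toReal ≤ 1 - ε + c := hupper (1 - ε + c) (by linarith)
    linarith
  have hlo : 1 - ε - c - γ₁ - γ₂ ≤ (μ T).toReal := by
    have h' := htriple Sl T hinc2
    have hSl : 1 - ε - c ≤ (μ Sl).toReal := hlower (1 - ε - c) (by linarith)
    linarith
  have hbnd : c + γ₁ + γ₂ ≤ 6 * δ₁ + 4 * δ₂ + 2 * D * (δ₂ + 2 * t) + γ₁ + γ₂ := by
    rw [hc_def]
    nlinarith [mul_nonneg hD ht0, mul_nonneg hD hδ₂]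
  rw [abs_le]
  constructor <;> [skip; skip] <;> [linarith; linarith]
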